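/- (Schnirelmann) Let A, B be sets of nonnegative integers with 0 ∈ A and 0 ∈ B. Then σ(A+B) ≥ σ(A) + σ(B) - σ(A)·σ(B). -/

import Mathlib

open scoped Classical Pointwise

open Finset

/-- Auxiliary: the end of the "gap" following `a` within `[0, n]` relative to the set `A`:
one less than the least element of `A ∩ (a, n]`, or `n` if there is none. -/
noncomputable def nxtGap (A : Set ℕ) (n a : ℕ) : ℕ :=
  if h : ({x ∈ Finset.Ioc a n | x ∈ A}).Nonempty
  then ({x ∈ Finset.Ioc a n | x ∈ A}).min' h - 1
  else n

lemma nxtGap_le (A : Set ℕ) (n a : ℕ) : nxtGap A n a ≤ n := by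
  rw [nxtGap]
  split_ifs with h
  · have := Finset.min'_mem _ h
    simp only [Finset.mem_filter, Finset.mem_Ioc] at this
    omega
  · exact le_rfl

lemma nxtGap_notA (A : Set ℕ) (n a m : ℕ) (hm : m ∈ Finset.Ioc a (nxtGap A n a)) : m ∉ A := by
  intro hmA
  simp only [Finset.mem_Ioc] at hm
  have hmn : m ≤ n := le_trans hm.2 (nxtGap_le A n a)
  have hmem : m ∈ {x ∈ Finset.Ioc a n | x ∈ A} := by
    simp only [Finset.mem_filter, Finset.mem_Ioc]
    exact ⟨⟨hm.1, hmn⟩, hmA⟩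
  have hne : ({x ∈ Finset.Ioc a n | x ∈ A}).Nonempty := ⟨m, hmem⟩
  have hmin := Finset.min'_le _ m hmem
  have hmin_mem := Finset.min'_mem _ hne
  simp only [Finset.mem_filter, Finset.mem_Ioc] at hmin_mem
  rw [nxtGap, dif_pos hne] at hm
  omega

lemma nxtGap_lt (A : Set ℕ) (n a a' : ℕ) (haa : a < a') (ha'n : a' ≤ n) (ha' : a' ∈ A) :
    nxtGap A n a < a' := by
  have hmem : a' ∈ {x ∈ Finset.Ioc a n | x ∈ A} := by
    simp only [Finset.mem_filter, Finset.mem_Ioc]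
    exact ⟨⟨haa, ha'n⟩, ha'⟩
  have hne : ({x ∈ Finset.Ioc a n | x ∈ A}).Nonempty := ⟨a', hmem⟩
  have hmin := Finset.min'_le _ a' hmem
  have hmin_mem := Finset.min'_mem _ hne
  simp only [Finset.mem_filter, Finset.mem_Ioc] at hmin_mem
  rw [nxtGap, dif_pos hne]
  omega

lemma nxtGap_cover (A : Set ℕ) (n m : ℕ) (hA : 0 ∈ A) (hm0 : 0 < m) (hmn : m ≤ n)
    (hmA : m ∉ A) : ∃ a, a ∈ A ∧ a ≤ n ∧ m ∈ Finset.Ioc a (nxtGap A n a) := by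
  have hne : ({x ∈ Finset.range m | x ∈ A}).Nonempty :=
    ⟨0, by simp [hm0, hA]⟩
  set a := ({x ∈ Finset.range m | x ∈ A}).max' hne with ha
  have hamem := Finset.max'_mem _ hne
  rw [← ha] at hamem
  simp only [Finset.mem_filter, Finset.mem_range] at hamem
  refine ⟨a, hamem.2, le_trans (le_of_lt hamem.1) hmn, ?_⟩
  simp only [Finset.mem_Ioc]
  refine ⟨hamem.1, ?_⟩
  by_contra hlt
  push_neg at hlt
  rw [nxtGap] at hlt
  split_ifs at hlt with h
  · have hmin_mem := Finset.min'_mem _ h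
    simp only [Finset.mem_filter, Finset.mem_Ioc] at hmin_mem
    set c := ({x ∈ Finset.Ioc a n | x ∈ A}).min' h with hc
    have hcm : c < m := by
      rcases Nat.lt_or_ge c m with h' | h'
      · exact h'
      · exfalso; have : c = m := by omega
        exact hmA (this ▸ hmin_mem.2)
    have : c ≤ a := Finset.le_max' _ c (by simp [Finset.mem_filter, hcm, hmin_mem.2])
    omega
  · omega

/-- (Schnirelmann) Let `A, B` be sets of nonnegative integers with `0 ∈ A` and `0 ∈ B`.
Then `σ(A+B) ≥ σ(A) + σ(B) - σ(A)·σ(B)`, where `σ` denotes the Schnirelmann density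
`σ(A) = inf_{n ≥ 1} A(n)/n` with `A(n) = #{a ∈ A : 1 ≤ a ≤ n}`. -/
theorem stmt_8 (A B : Set ℕ) (hA : 0 ∈ A) (hB : 0 ∈ B) :
    schnirelmannDensity (A + B) ≥
      schnirelmannDensity A + schnirelmannDensity B -
        schnirelmannDensity A * schnirelmannDensity B := by
  rw [ge_iff_le, le_schnirelmannDensity_iff]
  intro n hn
  classical
  set α := schnirelmannDensity A with hα
  set β := schnirelmannDensity B with hβ
  set Af : Finset ℕ := {a ∈ Finset.Ioc 0 n | a ∈ A} with hAfdef
  set Af0 : Finset ℕ := {a ∈ Finset.range (n+1) | a ∈ A} with hAf0def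
  set Cf : Finset ℕ := {a ∈ Finset.Ioc 0 n | a ∈ A + B} with hCfdef
  set fib : ℕ → Finset ℕ :=
    fun a => {m ∈ Finset.Ioc a (nxtGap A n a) | (m - a) ∈ B} with hfibdef
  set E : Finset ℕ := Af0.biUnion fib with hEdef
  -- the unfiltered fibers are disjoint
  have hdisj0 : ∀ a ∈ Af0, ∀ a' ∈ Af0, a ≠ a' →
      Disjoint (Finset.Ioc a (nxtGap A n a)) (Finset.Ioc a' (nxtGap A n a')) := by
    have key : ∀ a ∈ Af0, ∀ a' ∈ Af0, a < a' →
        Disjoint (Finset.Ioc a (nxtGap A n a)) (Finset.Ioc a' (nxtGap A n a')) := by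
      intro a ha a' ha' hlt
      simp only [hAf0def, Finset.mem_filter, Finset.mem_range] at ha'
      have := nxtGap_lt A n a a' hlt (by omega) ha'.2
      rw [Finset.disjoint_left]
      intro m hm hm'
      simp only [Finset.mem_Ioc] at hm hm'
      omega
    intro a ha a' ha' hne
    rcases lt_or_gt_of_ne hne with h | h
    · exact key a ha a' ha' h
    · exact (key a' ha' a ha h).symm
  have hdisj : ∀ a ∈ Af0, ∀ a' ∈ Af0, a ≠ a' → Disjoint (fib a) (fib a') := by
    intro a ha a' ha' hne
    exact Finset.disjoint_of_subset_left (Finset.filter_subset _ _)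
      (Finset.disjoint_of_subset_right (Finset.filter_subset _ _) (hdisj0 a ha a' ha' hne))
  -- E ∪ Af ⊆ Cf, disjointly
  have hAfC : Af ⊆ Cf := by
    intro m hm
    simp only [hAfdef, hCfdef, Finset.mem_filter, Finset.mem_Ioc] at hm ⊢
    exact ⟨hm.1, Set.mem_add.mpr ⟨m, hm.2, 0, hB, add_zero m⟩⟩
  have hEC : E ⊆ Cf := by
    intro m hm
    simp only [hEdef, Finset.mem_biUnion] at hm
    obtain ⟨a, ha, hm⟩ := hm
    simp only [hfibdef, Finset.mem_filter, Finset.mem_Ioc] at hm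
    simp only [hAf0def, Finset.mem_filter, Finset.mem_range] at ha
    have hmn : m ≤ n := le_trans hm.1.2 (nxtGap_le A n a)
    simp only [hCfdef, Finset.mem_filter, Finset.mem_Ioc]
    refine ⟨⟨by omega, hmn⟩, Set.mem_add.mpr ⟨a, ha.2, m - a, hm.2, by omega⟩⟩
  have hAfE : Disjoint Af E := by
    rw [Finset.disjoint_left]
    intro m hm hm'
    simp only [hEdef, Finset.mem_biUnion] at hm'
    obtain ⟨a, _, hm'⟩ := hm'
    simp only [hfibdef, Finset.mem_filter] at hm'
    simp only [hAfdef, Finset.mem_filter] at hm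
    exact nxtGap_notA A n a m hm'.1 hm.2
  -- counting
  have hcardC : #Af + #E ≤ #Cf := by
    rw [← Finset.card_union_of_disjoint hAfE]
    exact Finset.card_le_card (Finset.union_subset hAfC hEC)
  have hcardE : #E = ∑ a ∈ Af0, #(fib a) := Finset.card_biUnion hdisj
  -- each fiber has the same count as B on an initial interval
  have hfib_card : ∀ a, #(fib a) = #{b ∈ Finset.Ioc 0 (nxtGap A n a - a) | b ∈ B} := by
    intro a
    apply Finset.card_nbij' (fun m => m - a) (fun b => b + a)
    · intro m hm
      simp only [hfibdef, Finset.mem_coe, Finset.mem_filter, Finset.mem_Ioc] at hm ⊢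
      exact ⟨by omega, hm.2⟩
    · intro b hb
      simp only [hfibdef, Finset.mem_coe, Finset.mem_filter, Finset.mem_Ioc] at hb ⊢
      refine ⟨⟨by omega, by omega⟩, ?_⟩
      have : b + a - a = b := by omega
      rw [this]; exact hb.2
    · intro m hm
      simp only [hfibdef, Finset.mem_coe, Finset.mem_filter, Finset.mem_Ioc] at hm
      dsimp only
      omega
    · intro b hb
      dsimp only
      omega
  have hfib_ge : ∀ a, β * ((nxtGap A n a - a : ℕ) : ℝ) ≤ (#(fib a) : ℝ) := by
    intro a
    rw [hfib_card a, hβ]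
    exact schnirelmannDensity_mul_le_card_filter
  -- total gap length
  have hcover : Af0.biUnion (fun a => Finset.Ioc a (nxtGap A n a)) = Finset.Ioc 0 n \ Af := by
    ext m
    simp only [Finset.mem_biUnion, Finset.mem_sdiff, Finset.mem_Ioc, hAfdef, hAf0def,
      Finset.mem_filter, Finset.mem_range]
    constructor
    · rintro ⟨a, ha, hm⟩
      have hnotA := nxtGap_notA A n a m (by simpa using hm)
      have hmn : m ≤ nxtGap A n a := hm.2
      have := nxtGap_le A n a
      exact ⟨⟨by omega, by omega⟩, fun h => hnotA h.2⟩
    · rintro ⟨⟨hm0, hmn⟩, hnot⟩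
      have hmA : m ∉ A := fun h => hnot ⟨⟨hm0, hmn⟩, h⟩
      obtain ⟨a, haA, han, hm⟩ := nxtGap_cover A n m hA hm0 hmn hmA
      simp only [Finset.mem_Ioc] at hm
      exact ⟨a, ⟨by omega, haA⟩, hm⟩
  have hAfsub : Af ⊆ Finset.Ioc 0 n := Finset.filter_subset _ _
  have hgapsum : ∑ a ∈ Af0, (nxtGap A n a - a) = n - #Af := by
    have h1 : #(Af0.biUnion (fun a => Finset.Ioc a (nxtGap A n a)))
        = ∑ a ∈ Af0, #(Finset.Ioc a (nxtGap A n a)) := Finset.card_biUnion hdisj0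
    rw [hcover] at h1
    rw [Finset.card_sdiff_of_subset hAfsub] at h1
    simp only [Nat.card_Ioc, Nat.sub_zero] at h1
    omega
  have hAf_le : #Af ≤ n := by
    calc #Af ≤ #(Finset.Ioc 0 n) := Finset.card_le_card hAfsub
    _ = n := by simp
  -- real inequalities
  have hE_ge : β * ((n : ℝ) - #Af) ≤ (#E : ℝ) := by
    have h1 : ∑ a ∈ Af0, β * ((nxtGap A n a - a : ℕ) : ℝ) ≤ (#E : ℝ) := by
      rw [hcardE]
      push_cast
      exact Finset.sum_le_sum fun a _ => hfib_ge a
    rw [← Finset.mul_sum] at h1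
    have h2 : ∑ a ∈ Af0, ((nxtGap A n a - a : ℕ) : ℝ) = (n : ℝ) - #Af := by
      rw [← Nat.cast_sum]
      rw [hgapsum]
      rw [Nat.cast_sub hAf_le]
    rwa [h2] at h1
  have hAf_ge : α * n ≤ (#Af : ℝ) := schnirelmannDensity_mul_le_card_filter
  have hβ1 : β ≤ 1 := schnirelmannDensity_le_one
  have hβ0 : (0 : ℝ) ≤ β := schnirelmannDensity_nonneg
  have hCR : (#Af : ℝ) + #E ≤ (#Cf : ℝ) := by exact_mod_cast hcardC
  have hn' : (0 : ℝ) < n := by exact_mod_cast hn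
  rw [le_div_iff₀ hn']
  nlinarith [mul_nonneg (sub_nonneg.2 hAf_ge) (sub_nonneg.2 hβ1)]
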